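/- Let p be a prime and let k ≥ 1 and 0 ≤ s < e be integers. If the pointed group (ℤ ⊕ ℤ/p^e, (k, p^s)) is weakly rigid, then p^{s+1} divides k. -/

import Mathlib

/-- Let `p` be a prime, `k ≥ 1` and `0 ≤ s < e`. If the pointed group
`(ℤ ⊕ ℤ/p^e, (k, p^s))` is weakly rigid, then `p^(s+1)` divides `k`. -/
theorem stmt5 (p : ℕ) (hp : p.Prime) (k : ℤ) (hk : 1 ≤ k) (s e : ℕ) (hse : s < e)
    (hw : ∀ f : ℤ × ZMod (p ^ e) →+ ℤ × ZMod (p ^ e),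
      f (k, (p : ZMod (p ^ e)) ^ s) = (k, (p : ZMod (p ^ e)) ^ s) → Function.Bijective f) :
    (p : ℤ) ^ (s + 1) ∣ k := by
  by_contra h
  have he : 0 < e := lt_of_le_of_lt (Nat.zero_le s) hse
  have hpe : 1 < p ^ e := Nat.one_lt_pow (by omega) hp.one_lt
  haveI : Fact (1 < p ^ e) := ⟨hpe⟩
  set n := k.toNat with hndef
  have hn : (n : ℤ) = k := Int.toNat_of_nonneg (by linarith)
  have hn0 : n ≠ 0 := by omega
  set t := n.factorization p with htdef
  have ht : t ≤ s := by
    by_contra ht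
    apply h
    have h1 : p ^ (s + 1) ∣ p ^ t := pow_dvd_pow p (by omega)
    have h2 : p ^ t ∣ n := Nat.ordProj_dvd n p
    have := h1.trans h2
    rw [← hn]
    exact_mod_cast Int.natCast_dvd_natCast.mpr this
  set m := n / p ^ t with hmdef
  have hm : p ^ t * m = n := Nat.ordProj_mul_ordCompl_eq_self n p
  have hcop : Nat.Coprime p m := Nat.coprime_ordCompl hp hn0
  have hunit : IsUnit (m : ZMod (p ^ e)) := by
    rw [ZMod.isUnit_iff_coprime]
    exact (hcop.symm).pow_right e
  obtain ⟨u, hu⟩ := hunit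
  set c : ZMod (p ^ e) := (p : ZMod (p ^ e)) ^ (s - t) * ↑u⁻¹ with hcdef
  set f : ℤ × ZMod (p ^ e) →+ ℤ × ZMod (p ^ e) :=
    (AddMonoidHom.fst ℤ (ZMod (p ^ e))).prod
      ((zmultiplesHom (ZMod (p ^ e)) c).comp (AddMonoidHom.fst ℤ (ZMod (p ^ e)))) with hfdef
  have hfapp : ∀ x : ℤ, ∀ y : ZMod (p ^ e), f (x, y) = (x, x • c) := by
    intro x y
    simp [hfdef]
  have hk2 : ((k : ℤ) : ZMod (p ^ e)) = (p : ZMod (p ^ e)) ^ t * (m : ZMod (p ^ e)) := by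
    rw [← hn, ← hm]
    push_cast
    ring
  have key : (k : ℤ) • c = (p : ZMod (p ^ e)) ^ s := by
    rw [zsmul_eq_mul, hk2, hcdef, ← hu]
    calc (p : ZMod (p ^ e)) ^ t * ↑u * ((p : ZMod (p ^ e)) ^ (s - t) * ↑u⁻¹)
        = (p : ZMod (p ^ e)) ^ (t + (s - t)) * (↑u * ↑u⁻¹) := by rw [pow_add]; ring
      _ = (p : ZMod (p ^ e)) ^ s := by
          rw [Nat.add_sub_cancel' ht, Units.mul_inv, mul_one]
  have hfix : f (k, (p : ZMod (p ^ e)) ^ s) = (k, (p : ZMod (p ^ e)) ^ s) := by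
    rw [hfapp, key]
  have hb := hw f hfix
  have heq : f (0, (1 : ZMod (p ^ e))) = f (0, 0) := by
    rw [hfapp, hfapp]
  have := hb.1 heq
  have h10 : (1 : ZMod (p ^ e)) = 0 := by
    simpa using congrArg Prod.snd this
  exact one_ne_zero h10
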